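/- Let H be a finite simple graph without isolated vertices with vertex set {v_1,…,v_z}, let G be a finite simple graph, let h : G → H be a graph homomorphism (an H-colouring of G), and let s_1,…,s_z be signatures, where every vertex w of G carries the signature s_i with h(w) = v_i. For i ∈ {1,…,z} set n_i = #{w ∈ V(G) : h(w) = v_i}. Then Holant(G,h,s⃗) = ∏_{i=1}^z s_i(0)^{n_i} · ∑_{σ⃗} #Emb_cp(H↿σ⃗ → (G,h)) · ∏_{i=1}^z ∏_{B ∈ σ⃗(v_i)} s_i(|B|)/s_i(0), where the sum is over all fractures σ⃗ of H. -/

import Mathlib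

open Finset

/-- `P` is a set partition of the finite set `s`. -/
def IsPartitionOf {α : Type*} [DecidableEq α] (s : Finset α) (P : Finset (Finset α)) : Prop :=
  ∅ ∉ P ∧ (∀ B ∈ P, B ⊆ s) ∧ ∀ a ∈ s, ∃! B, B ∈ P ∧ a ∈ B

variable {VH VG : Type*} [Fintype VH] [DecidableEq VH] [Fintype VG] [DecidableEq VG]

/-- The set `E_H(v)` of edges of `H` incident to `v`. -/
def incEdges (H : SimpleGraph VH) [DecidableRel H.Adj] (v : VH) : Finset (Sym2 VH) :=
  H.edgeFinset.filter fun e => v ∈ e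

open Classical in
/-- The finset of all fractures of `H`: tuples assigning to each vertex `v` a set
partition of the edges of `H` incident to `v`. -/
noncomputable def fracturesFinset (H : SimpleGraph VH) [DecidableRel H.Adj] :
    Finset (VH → Finset (Finset (Sym2 VH))) :=
  (Fintype.piFinset fun v => (incEdges H v).powerset.powerset).filter fun σ =>
    ∀ v, IsPartitionOf (incEdges H v) (σ v)

/-- The fractured graph `H ↿ σ⃗`: vertices are the pairs `(v, B)` with `B ∈ σ⃗(v)`, and
`(u, B)`, `(v, B')` are adjacent iff `{u,v}` is an edge of `H` contained in both `B` and
`B'`. -/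
def Fractured (H : SimpleGraph VH) (σ : VH → Finset (Finset (Sym2 VH))) :
    SimpleGraph {p : VH × Finset (Sym2 VH) // p.2 ∈ σ p.1} where
  Adj p q := H.Adj p.1.1 q.1.1 ∧
    Sym2.mk p.1.1 q.1.1 ∈ p.1.2 ∧ Sym2.mk p.1.1 q.1.1 ∈ q.1.2
  symm := by
    constructor
    rintro p q ⟨h1, h2, h3⟩
    refine ⟨h1.symm, ?_, ?_⟩
    · rw [show Sym2.mk q.1.1 p.1.1 = Sym2.mk p.1.1 q.1.1 from Sym2.eq_swap]
      exact h3
    · rw [show Sym2.mk q.1.1 p.1.1 = Sym2.mk p.1.1 q.1.1 from Sym2.eq_swap]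
      exact h2
  loopless := ⟨fun p hp => H.loopless.irrefl p.1.1 hp.1⟩

/-- `A ⊆ E(G)` is colourful w.r.t. the `H`-colouring `h`: the map `e ↦ h(e)` restricts to
a bijection from `A` onto `E(H)`. -/
def Colourful (H : SimpleGraph VH) (h : VG → VH) (A : Finset (Sym2 VG)) : Prop :=
  Set.BijOn (Sym2.map h) ↑A H.edgeSet

open Classical in
/-- `Holant(G, h, s⃗) = ∑_{A colourful} ∏_{w ∈ V(G)} s_{h(w)}(|A ∩ E(w)|)`. -/
noncomputable def holant (G : SimpleGraph VG) [DecidableRel G.Adj] (H : SimpleGraph VH)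
    (h : VG → VH) (s : VH → ℕ → ℂ) : ℂ :=
  ∑ A ∈ G.edgeFinset.powerset.filter (Colourful H h),
    ∏ w : VG, s (h w) ((A.filter fun e => w ∈ e).card)

/-- `#Emb_cp(H↿σ⃗ → (G,h))`: the number of injective graph homomorphisms from the fractured
graph to `G` that are colour-prescribed, i.e. `h(φ(v,B)) = v`. -/
noncomputable def embCP (H : SimpleGraph VH) (σ : VH → Finset (Finset (Sym2 VH)))
    (G : SimpleGraph VG) (h : VG → VH) : ℕ :=
  Nat.card {φ : {p : VH × Finset (Sym2 VH) // p.2 ∈ σ p.1} → VG //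
    Function.Injective φ ∧
      (∀ x y, (Fractured H σ).Adj x y → G.Adj (φ x) (φ y)) ∧ ∀ x, h (φ x) = x.1.1}

/-! ### Auxiliary definitions -/

section Aux

/-- The block of edges of `H` seen at a vertex `w` of `G`. -/
noncomputable def blockOf (h : VG → VH) (A : Finset (Sym2 VG)) (w : VG) : Finset (Sym2 VH) :=
  (A.filter fun e => w ∈ e).image (Sym2.map h)

open Classical in
/-- The fracture induced by an edge set `A`. -/
noncomputable def fracOf (h : VG → VH) (A : Finset (Sym2 VG)) (v : VH) :
    Finset (Finset (Sym2 VH)) :=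
  ((univ.filter fun w => h w = v).image (blockOf h A)).filter fun B => B ≠ ∅

open Classical in
/-- The edge set of `G` induced by an embedding of the fractured graph. -/
noncomputable def edgesOf (H : SimpleGraph VH) (σ : VH → Finset (Finset (Sym2 VH)))
    (φ : {p : VH × Finset (Sym2 VH) // p.2 ∈ σ p.1} → VG) : Finset (Sym2 VG) :=
  univ.filter fun e => ∃ x y, (Fractured H σ).Adj x y ∧ e = Sym2.mk (φ x) (φ y)

lemma mem_blockOf {h : VG → VH} {A : Finset (Sym2 VG)} {w : VG} {f : Sym2 VH} :
    f ∈ blockOf h A w ↔ ∃ e ∈ A, w ∈ e ∧ Sym2.map h e = f := by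
  simp only [blockOf, Finset.mem_image, Finset.mem_filter, and_assoc]

lemma mem_fracOf {h : VG → VH} {A : Finset (Sym2 VG)} {v : VH} {B : Finset (Sym2 VH)} :
    B ∈ fracOf h A v ↔ (∃ w, h w = v ∧ blockOf h A w = B) ∧ B ≠ ∅ := by
  simp only [fracOf, Finset.mem_filter, Finset.mem_image, Finset.mem_univ, true_and]

lemma mem_edgesOf {H : SimpleGraph VH} {σ : VH → Finset (Finset (Sym2 VH))}
    {φ : {p : VH × Finset (Sym2 VH) // p.2 ∈ σ p.1} → VG} {e : Sym2 VG} :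
    e ∈ edgesOf H σ φ ↔ ∃ x y, (Fractured H σ).Adj x y ∧ e = Sym2.mk (φ x) (φ y) := by
  simp [edgesOf]

lemma adj_of_mem_edge {G : SimpleGraph VG} [DecidableRel G.Adj] {e : Sym2 VG} {w w' : VG}
    (he : e ∈ G.edgeFinset) (hw : w ∈ e) (hw' : w' ∈ e) (hne : w ≠ w') : G.Adj w w' := by
  have h2 : e = Sym2.mk (w) (w') := (Sym2.mem_and_mem_iff hne).1 ⟨hw, hw'⟩
  rw [SimpleGraph.mem_edgeFinset, h2, SimpleGraph.mem_edgeSet] at he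
  exact he

section ColourfulSide

variable {H : SimpleGraph VH} [DecidableRel H.Adj] {G : SimpleGraph VG} [DecidableRel G.Adj]
  {h : VG → VH} {A : Finset (Sym2 VG)}

lemma vertex_unique (hb : Set.BijOn (Sym2.map h) ↑A H.edgeSet)
    {e : Sym2 VG} (he : e ∈ A) {w w' : VG} (hw : w ∈ e) (hw' : w' ∈ e)
    (hcol : h w = h w') : w = w' := by
  by_contra hne
  have he2 : e = Sym2.mk (w) (w') := (Sym2.mem_and_mem_iff hne).1 ⟨hw, hw'⟩
  have hmem : Sym2.map h e ∈ H.edgeSet := hb.mapsTo (Finset.mem_coe.2 he)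
  rw [he2, Sym2.map_pair_eq, SimpleGraph.mem_edgeSet] at hmem
  exact hmem.ne hcol

lemma blockOf_disj (hb : Set.BijOn (Sym2.map h) ↑A H.edgeSet)
    {w w' : VG} (hcol : h w = h w') {f : Sym2 VH}
    (hf : f ∈ blockOf h A w) (hf' : f ∈ blockOf h A w') : w = w' := by
  obtain ⟨e, he, hwe, hme⟩ := mem_blockOf.1 hf
  obtain ⟨e', he', hwe', hme'⟩ := mem_blockOf.1 hf'
  have hee : e = e' := hb.injOn (Finset.mem_coe.2 he) (Finset.mem_coe.2 he')
    (hme.trans hme'.symm)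
  exact vertex_unique hb he hwe (hee ▸ hwe') hcol

lemma blockOf_unique (hb : Set.BijOn (Sym2.map h) ↑A H.edgeSet)
    {w w' : VG} (hcol : h w = h w') (hbe : blockOf h A w = blockOf h A w')
    (hne : blockOf h A w ≠ ∅) : w = w' := by
  obtain ⟨f, hf⟩ := Finset.nonempty_of_ne_empty hne
  exact blockOf_disj hb hcol hf (hbe ▸ hf)

lemma blockOf_subset_incEdges (hb : Set.BijOn (Sym2.map h) ↑A H.edgeSet) (w : VG) :
    blockOf h A w ⊆ incEdges H (h w) := by
  intro f hf
  obtain ⟨e, he, hwe, hme⟩ := mem_blockOf.1 hf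
  have hfe : f ∈ H.edgeSet := hme ▸ hb.mapsTo (Finset.mem_coe.2 he)
  refine Finset.mem_filter.2 ⟨SimpleGraph.mem_edgeFinset.2 hfe, ?_⟩
  exact hme ▸ Sym2.mem_map.2 ⟨w, hwe, rfl⟩

lemma fracOf_partition (hb : Set.BijOn (Sym2.map h) ↑A H.edgeSet) (v : VH) :
    IsPartitionOf (incEdges H v) (fracOf h A v) := by
  refine ⟨fun hc => (mem_fracOf.1 hc).2 rfl, ?_, ?_⟩
  · intro B hB
    obtain ⟨⟨w, hw, hwB⟩, -⟩ := mem_fracOf.1 hB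
    rw [← hwB, ← hw]
    exact blockOf_subset_incEdges hb w
  · intro f hf
    obtain ⟨hfE, hvf⟩ := Finset.mem_filter.1 hf
    obtain ⟨e, he, hme⟩ := hb.surjOn (SimpleGraph.mem_edgeFinset.1 hfE)
    have he' : e ∈ A := he
    obtain ⟨w, hwe, hwv⟩ := Sym2.mem_map.1 (show v ∈ Sym2.map h e from hme ▸ hvf)
    have hfB : f ∈ blockOf h A w := mem_blockOf.2 ⟨e, he', hwe, hme⟩
    refine ⟨blockOf h A w, ⟨mem_fracOf.2 ⟨⟨w, hwv, rfl⟩, ?_⟩, hfB⟩, ?_⟩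
    · intro hc; rw [hc] at hfB; exact absurd hfB (Finset.notMem_empty f)
    · rintro B ⟨hB, hfB'⟩
      obtain ⟨⟨w', hw', hwB'⟩, -⟩ := mem_fracOf.1 hB
      rw [← hwB']
      congr 1
      exact blockOf_disj hb (hw'.trans hwv.symm) (hwB' ▸ hfB') hfB

open Classical in
lemma fracOf_mem_fractures (hb : Set.BijOn (Sym2.map h) ↑A H.edgeSet) :
    fracOf h A ∈ fracturesFinset H := by
  refine Finset.mem_filter.2 ⟨Fintype.mem_piFinset.2 fun v => ?_, fun v => fracOf_partition hb v⟩
  rw [Finset.mem_powerset]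
  intro B hB
  rw [Finset.mem_powerset]
  exact (fracOf_partition hb v).2.1 B hB

lemma card_filter_eq_card_blockOf (hb : Set.BijOn (Sym2.map h) ↑A H.edgeSet) (w : VG) :
    (A.filter fun e => w ∈ e).card = (blockOf h A w).card := by
  refine (Finset.card_image_of_injOn ?_).symm
  exact hb.injOn.mono (by intro e he; exact Finset.mem_coe.2 (Finset.mem_of_mem_filter e he))

end ColourfulSide

section EmbSide

variable {H : SimpleGraph VH} [DecidableRel H.Adj] {G : SimpleGraph VG} [DecidableRel G.Adj]
  {h : VG → VH} {σ : VH → Finset (Finset (Sym2 VH))}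
  {φ : {p : VH × Finset (Sym2 VH) // p.2 ∈ σ p.1} → VG}

lemma block_eq_of_mem (hσ : ∀ v, IsPartitionOf (incEdges H v) (σ v)) {v : VH}
    {B B' : Finset (Sym2 VH)} (hB : B ∈ σ v) (hB' : B' ∈ σ v) {f : Sym2 VH}
    (hf : f ∈ B) (hf' : f ∈ B') : B = B' := by
  obtain ⟨-, -, hu⟩ := hσ v
  obtain ⟨C, -, hC⟩ := hu f ((hσ v).2.1 B hB hf)
  rw [hC B ⟨hB, hf⟩, hC B' ⟨hB', hf'⟩]

lemma mem_incEdges {v : VH} {f : Sym2 VH} : f ∈ incEdges H v ↔ f ∈ H.edgeSet ∧ v ∈ f := by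
  simp [incEdges]

variable (hσ : ∀ v, IsPartitionOf (incEdges H v) (σ v))
  (hinj : Function.Injective φ)
  (hφG : ∀ x y, (Fractured H σ).Adj x y → G.Adj (φ x) (φ y))
  (hcol : ∀ x, h (φ x) = x.1.1)

include hcol in
lemma map_edge (x y : {p : VH × Finset (Sym2 VH) // p.2 ∈ σ p.1}) :
    Sym2.map h (Sym2.mk (φ x) (φ y)) = Sym2.mk (x.1.1) (y.1.1) := by
  rw [Sym2.map_pair_eq, hcol, hcol]

include hφG in
lemma edgesOf_subset : edgesOf H σ φ ⊆ G.edgeFinset := by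
  intro e he
  obtain ⟨x, y, hxy, rfl⟩ := mem_edgesOf.1 he
  rw [SimpleGraph.mem_edgeFinset]
  exact (hφG x y hxy : G.Adj _ _)

include hσ hinj hφG hcol in
lemma edgesOf_colourful : Set.BijOn (Sym2.map h) ↑(edgesOf H σ φ) H.edgeSet := by
  refine ⟨?_, ?_, ?_⟩
  · intro e he
    obtain ⟨x, y, hxy, rfl⟩ := mem_edgesOf.1 (Finset.mem_coe.1 he)
    rw [map_edge hcol, SimpleGraph.mem_edgeSet]
    exact hxy.1
  · intro e he e' he' hee
    obtain ⟨x, y, hxy, rfl⟩ := mem_edgesOf.1 (Finset.mem_coe.1 he)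
    obtain ⟨x', y', hxy', rfl⟩ := mem_edgesOf.1 (Finset.mem_coe.1 he')
    rw [map_edge hcol, map_edge hcol] at hee
    replace hee := (Sym2.mk_eq_mk_iff (p := (x.1.1, y.1.1)) (q := (x'.1.1, y'.1.1))).1 hee
    -- reduce the swapped case to the unswapped one
    have key : ∀ (x' y' : {p : VH × Finset (Sym2 VH) // p.2 ∈ σ p.1}),
        (Fractured H σ).Adj x' y' → x.1.1 = x'.1.1 → y.1.1 = y'.1.1 →
        Sym2.mk (φ x) (φ y) = Sym2.mk (φ x') (φ y') := by
      intro x' y' hxy' h1 h2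
      have hx : x = x' := by
        refine Subtype.ext (Prod.ext h1 ?_)
        refine block_eq_of_mem hσ x.2 (h1 ▸ x'.2) hxy.2.1 ?_
        have := hxy'.2.1
        rw [← h1, ← h2] at this
        exact this
      have hy : y = y' := by
        refine Subtype.ext (Prod.ext h2 ?_)
        refine block_eq_of_mem hσ y.2 (h2 ▸ y'.2) hxy.2.2 ?_
        have := hxy'.2.2
        rw [← h1, ← h2] at this
        exact this
      rw [hx, hy]
    rcases hee with hee | hee
    · exact key x' y' hxy' (Prod.ext_iff.1 hee).1 (Prod.ext_iff.1 hee).2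
    · have h1 : x.1.1 = y'.1.1 := (Prod.ext_iff.1 hee).1
      have h2 : y.1.1 = x'.1.1 := (Prod.ext_iff.1 hee).2
      have := key y' x' (hxy'.symm) h1 h2
      rw [this]
      exact Sym2.eq_swap
  · intro f hf
    induction f using Sym2.ind with
    | _ u v =>
      have hadj : H.Adj u v := (SimpleGraph.mem_edgeSet H).1 hf
      have hfu : Sym2.mk (u) (v) ∈ incEdges H u :=
        mem_incEdges.2 ⟨hf, Sym2.mem_mk_left u v⟩
      have hfv : Sym2.mk (u) (v) ∈ incEdges H v :=
        mem_incEdges.2 ⟨hf, Sym2.mem_mk_right u v⟩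
      obtain ⟨B, ⟨hB, hfB⟩, -⟩ := (hσ u).2.2 _ hfu
      obtain ⟨B', ⟨hB', hfB'⟩, -⟩ := (hσ v).2.2 _ hfv
      refine ⟨Sym2.mk (φ ⟨(u, B), hB⟩) (φ ⟨(v, B'), hB'⟩), ?_, ?_⟩
      · refine Finset.mem_coe.2 (mem_edgesOf.2 ⟨⟨(u, B), hB⟩, ⟨(v, B'), hB'⟩, ⟨hadj, hfB, hfB'⟩, rfl⟩)
      · rw [map_edge hcol]

include hσ hinj hφG hcol in
lemma blockOf_edgesOf (x : {p : VH × Finset (Sym2 VH) // p.2 ∈ σ p.1}) :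
    blockOf h (edgesOf H σ φ) (φ x) = x.1.2 := by
  ext f
  constructor
  · intro hf
    obtain ⟨e, he, hwe, hme⟩ := mem_blockOf.1 hf
    obtain ⟨a, b, hab, rfl⟩ := mem_edgesOf.1 he
    rw [map_edge hcol] at hme
    rcases Sym2.mem_iff.1 hwe with hw | hw
    · have hxa : x = a := hinj hw
      rw [← hme, hxa]
      exact hab.2.1
    · have hxb : x = b := hinj hw
      rw [← hme, hxb]
      exact hab.2.2
  · intro hf
    have hfi : f ∈ incEdges H x.1.1 := (hσ x.1.1).2.1 _ x.2 hf
    obtain ⟨hfe, hvf⟩ := mem_incEdges.1 hfi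
    obtain ⟨u, rfl⟩ := Sym2.mem_iff_exists.1 hvf
    have hadj : H.Adj x.1.1 u := (SimpleGraph.mem_edgeSet H).1 hfe
    have hfu : Sym2.mk (x.1.1) (u) ∈ incEdges H u :=
      mem_incEdges.2 ⟨hfe, Sym2.mem_mk_right _ _⟩
    obtain ⟨B', ⟨hB', hfB'⟩, -⟩ := (hσ u).2.2 _ hfu
    refine mem_blockOf.2 ⟨Sym2.mk (φ x) (φ ⟨(u, B'), hB'⟩), ?_, Sym2.mem_mk_left _ _, ?_⟩
    · exact mem_edgesOf.2 ⟨x, ⟨(u, B'), hB'⟩, ⟨hadj, hf, hfB'⟩, rfl⟩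
    · rw [map_edge hcol]

include hφG in
lemma blockOf_edgesOf_empty {w : VG} (hw : w ∉ Set.range φ) :
    blockOf h (edgesOf H σ φ) w = ∅ := by
  rw [Finset.eq_empty_iff_forall_notMem]
  intro f hf
  obtain ⟨e, he, hwe, -⟩ := mem_blockOf.1 hf
  obtain ⟨a, b, -, rfl⟩ := mem_edgesOf.1 he
  rcases Sym2.mem_iff.1 hwe with hw' | hw'
  · exact hw ⟨a, hw'.symm⟩
  · exact hw ⟨b, hw'.symm⟩

include hσ hinj hφG hcol in
lemma fracOf_edgesOf : fracOf h (edgesOf H σ φ) = σ := by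
  funext v
  ext B
  constructor
  · intro hB
    obtain ⟨⟨w, hwv, hwB⟩, hne⟩ := mem_fracOf.1 hB
    by_cases hw : w ∈ Set.range φ
    · obtain ⟨x, rfl⟩ := hw
      rw [← hwB, blockOf_edgesOf hσ hinj hφG hcol x, ← hwv, hcol x] at hB ⊢
      rw [blockOf_edgesOf hσ hinj hφG hcol x] at hwB
      have : v = x.1.1 := by rw [← hwv, hcol x]
      exact x.2
    · exact absurd (hwB ▸ blockOf_edgesOf_empty hφG hw) hne
  · intro hB
    refine mem_fracOf.2 ⟨⟨φ ⟨(v, B), hB⟩, hcol _, blockOf_edgesOf hσ hinj hφG hcol _⟩, ?_⟩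
    intro hc
    exact (hσ v).1 (hc ▸ hB)

end EmbSide

section PhiFor

variable {H : SimpleGraph VH} [DecidableRel H.Adj] {G : SimpleGraph VG} [DecidableRel G.Adj]
  {h : VG → VH} {A : Finset (Sym2 VG)} {σ : VH → Finset (Finset (Sym2 VH))}

/-- The inverse embedding extracted from a colourful set `A` with induced fracture `σ`. -/
noncomputable def phiFor (h : VG → VH) (A : Finset (Sym2 VG))
    (σ : VH → Finset (Finset (Sym2 VH))) (hfr : fracOf h A = σ)
    (x : {p : VH × Finset (Sym2 VH) // p.2 ∈ σ p.1}) : VG :=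
  (mem_fracOf.1 (show x.1.2 ∈ fracOf h A x.1.1 by rw [hfr]; exact x.2)).1.choose

lemma phiFor_spec (hfr : fracOf h A = σ) (x : {p : VH × Finset (Sym2 VH) // p.2 ∈ σ p.1}) :
    h (phiFor h A σ hfr x) = x.1.1 ∧ blockOf h A (phiFor h A σ hfr x) = x.1.2 :=
  (mem_fracOf.1 (show x.1.2 ∈ fracOf h A x.1.1 by rw [hfr]; exact x.2)).1.choose_spec

lemma block_ne_empty (hfr : fracOf h A = σ)
    (x : {p : VH × Finset (Sym2 VH) // p.2 ∈ σ p.1}) : x.1.2 ≠ ∅ :=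
  (mem_fracOf.1 (show x.1.2 ∈ fracOf h A x.1.1 by rw [hfr]; exact x.2)).2

lemma phiFor_unique (hb : Set.BijOn (Sym2.map h) ↑A H.edgeSet) (hfr : fracOf h A = σ)
    {x : {p : VH × Finset (Sym2 VH) // p.2 ∈ σ p.1}} {w : VG}
    (hw : h w = x.1.1) (hwB : blockOf h A w = x.1.2) : phiFor h A σ hfr x = w := by
  refine blockOf_unique hb ?_ ?_ ?_
  · rw [(phiFor_spec hfr x).1, hw]
  · rw [(phiFor_spec hfr x).2, hwB]
  · rw [(phiFor_spec hfr x).2]; exact block_ne_empty hfr x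

lemma phiFor_inj (hb : Set.BijOn (Sym2.map h) ↑A H.edgeSet) (hfr : fracOf h A = σ) :
    Function.Injective (phiFor h A σ hfr) := by
  intro x y heq
  have h1 : x.1.1 = y.1.1 := by
    rw [← (phiFor_spec hfr x).1, ← (phiFor_spec hfr y).1, heq]
  have h2 : x.1.2 = y.1.2 := by
    rw [← (phiFor_spec hfr x).2, ← (phiFor_spec hfr y).2, heq]
  exact Subtype.ext (Prod.ext h1 h2)

lemma phiFor_hom (hA : A ⊆ G.edgeFinset) (hb : Set.BijOn (Sym2.map h) ↑A H.edgeSet)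
    (hfr : fracOf h A = σ) :
    ∀ x y, (Fractured H σ).Adj x y → G.Adj (phiFor h A σ hfr x) (phiFor h A σ hfr y) := by
  rintro x y ⟨hH, hfx, hfy⟩
  have hfx' : Sym2.mk (x.1.1) (y.1.1) ∈ blockOf h A (phiFor h A σ hfr x) := by
    rw [(phiFor_spec hfr x).2]; exact hfx
  have hfy' : Sym2.mk (x.1.1) (y.1.1) ∈ blockOf h A (phiFor h A σ hfr y) := by
    rw [(phiFor_spec hfr y).2]; exact hfy
  obtain ⟨e, he, hwe, hme⟩ := mem_blockOf.1 hfx'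
  obtain ⟨e', he', hwe', hme'⟩ := mem_blockOf.1 hfy'
  have hee : e = e' := hb.injOn (Finset.mem_coe.2 he) (Finset.mem_coe.2 he')
    (hme.trans hme'.symm)
  have hne : phiFor h A σ hfr x ≠ phiFor h A σ hfr y := by
    intro hc
    apply hH.ne
    rw [← (phiFor_spec hfr x).1, ← (phiFor_spec hfr y).1, hc]
  exact adj_of_mem_edge (hA he) hwe (hee ▸ hwe') hne

lemma edgesOf_phiFor (hA : A ⊆ G.edgeFinset) (hb : Set.BijOn (Sym2.map h) ↑A H.edgeSet)
    (hfr : fracOf h A = σ) : edgesOf H σ (phiFor h A σ hfr) = A := by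
  refine Finset.Subset.antisymm ?_ ?_
  · intro e he
    obtain ⟨a, b, hab, rfl⟩ := mem_edgesOf.1 he
    have hfa : Sym2.mk (a.1.1) (b.1.1) ∈ blockOf h A (phiFor h A σ hfr a) := by
      rw [(phiFor_spec hfr a).2]; exact hab.2.1
    have hfb : Sym2.mk (a.1.1) (b.1.1) ∈ blockOf h A (phiFor h A σ hfr b) := by
      rw [(phiFor_spec hfr b).2]; exact hab.2.2
    obtain ⟨e0, he0, hwe0, hme0⟩ := mem_blockOf.1 hfa
    obtain ⟨e0', he0', hwe0', hme0'⟩ := mem_blockOf.1 hfb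
    have hee : e0 = e0' := hb.injOn (Finset.mem_coe.2 he0) (Finset.mem_coe.2 he0')
      (hme0.trans hme0'.symm)
    have hne : phiFor h A σ hfr a ≠ phiFor h A σ hfr b := by
      intro hc
      apply hab.1.ne
      rw [← (phiFor_spec hfr a).1, ← (phiFor_spec hfr b).1, hc]
    have he0eq : e0 = Sym2.mk (phiFor h A σ hfr a) (phiFor h A σ hfr b) :=
      (Sym2.mem_and_mem_iff hne).1 ⟨hwe0, hee ▸ hwe0'⟩
    rw [← he0eq]
    exact he0
  · intro e he
    revert he
    induction e using Sym2.ind with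
    | _ a b =>
      intro he
      have hmap : Sym2.map h (Sym2.mk (a) (b)) ∈ H.edgeSet := hb.mapsTo (Finset.mem_coe.2 he)
      rw [Sym2.map_pair_eq] at hmap
      have hHab : H.Adj (h a) (h b) := (SimpleGraph.mem_edgeSet H).1 hmap
      have hfa : Sym2.mk (h a) (h b) ∈ blockOf h A a :=
        mem_blockOf.2 ⟨Sym2.mk (a) (b), he, Sym2.mem_mk_left _ _, Sym2.map_pair_eq _ _ _⟩
      have hfb : Sym2.mk (h a) (h b) ∈ blockOf h A b :=
        mem_blockOf.2 ⟨Sym2.mk (a) (b), he, Sym2.mem_mk_right _ _, Sym2.map_pair_eq _ _ _⟩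
      have hBa : blockOf h A a ∈ σ (h a) := by
        rw [← hfr]
        exact mem_fracOf.2 ⟨⟨a, rfl, rfl⟩, Finset.ne_empty_of_mem hfa⟩
      have hBb : blockOf h A b ∈ σ (h b) := by
        rw [← hfr]
        exact mem_fracOf.2 ⟨⟨b, rfl, rfl⟩, Finset.ne_empty_of_mem hfb⟩
      set x : {p : VH × Finset (Sym2 VH) // p.2 ∈ σ p.1} := ⟨(h a, blockOf h A a), hBa⟩
      set y : {p : VH × Finset (Sym2 VH) // p.2 ∈ σ p.1} := ⟨(h b, blockOf h A b), hBb⟩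
      have hadj : (Fractured H σ).Adj x y := ⟨hHab, hfa, hfb⟩
      have hpx : phiFor h A σ hfr x = a := phiFor_unique hb hfr rfl rfl
      have hpy : phiFor h A σ hfr y = b := phiFor_unique hb hfr rfl rfl
      exact mem_edgesOf.2 ⟨x, y, hadj, by rw [hpx, hpy]⟩

end PhiFor

section Weight

variable {H : SimpleGraph VH} [DecidableRel H.Adj] {G : SimpleGraph VG} [DecidableRel G.Adj]
  {h : VG → VH} {A : Finset (Sym2 VG)}

open Classical in
lemma weight_eq {s : VH → ℕ → ℂ} (hs : ∀ v, s v 0 ≠ 0)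
    (hb : Set.BijOn (Sym2.map h) ↑A H.edgeSet) :
    (∏ w : VG, s (h w) ((A.filter fun e => w ∈ e).card)) =
      (∏ v : VH, s v 0 ^ (univ.filter fun w => h w = v).card) *
        ∏ v : VH, ∏ B ∈ fracOf h A v, s v B.card / s v 0 := by
  rw [← Finset.prod_mul_distrib]
  rw [← Finset.prod_fiberwise_of_maps_to (g := h) (t := univ) (fun w _ => Finset.mem_univ (h w))
    (fun w => s (h w) ((A.filter fun e => w ∈ e).card))]
  refine Finset.prod_congr rfl fun v _ => ?_
  have hstep : ∀ w ∈ univ.filter fun w => h w = v,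
      s (h w) ((A.filter fun e => w ∈ e).card) = s v (blockOf h A w).card := by
    intro w hw
    rw [(Finset.mem_filter.1 hw).2, card_filter_eq_card_blockOf hb]
  rw [Finset.prod_congr rfl hstep]
  rw [← Finset.prod_filter_mul_prod_filter_not (univ.filter fun w => h w = v)
    (fun w => blockOf h A w = ∅) (fun w => s v (blockOf h A w).card)]
  have h1 : ∀ w ∈ (univ.filter fun w => h w = v).filter (fun w => blockOf h A w = ∅),
      s v (blockOf h A w).card = s v 0 := by
    intro w hw
    rw [(Finset.mem_filter.1 hw).2]
    simp
  rw [Finset.prod_congr rfl h1, Finset.prod_const]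
  have h2 : fracOf h A v =
      ((univ.filter fun w => h w = v).filter fun w => ¬blockOf h A w = ∅).image (blockOf h A) := by
    ext B
    rw [mem_fracOf]
    simp only [Finset.mem_image, Finset.mem_filter, Finset.mem_univ, true_and]
    constructor
    · rintro ⟨⟨w, hwv, rfl⟩, hne⟩; exact ⟨w, ⟨hwv, hne⟩, rfl⟩
    · rintro ⟨w, ⟨hwv, hne⟩, rfl⟩; exact ⟨⟨w, hwv, rfl⟩, hne⟩
  have hinjOn : ∀ w ∈ (univ.filter fun w => h w = v).filter (fun w => ¬blockOf h A w = ∅),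
      ∀ w' ∈ (univ.filter fun w => h w = v).filter (fun w => ¬blockOf h A w = ∅),
      blockOf h A w = blockOf h A w' → w = w' := by
    intro w hw w' hw' hbe
    simp only [Finset.mem_filter, Finset.mem_univ, true_and] at hw hw'
    exact blockOf_unique hb (hw.1.trans hw'.1.symm) hbe hw.2
  rw [h2, Finset.prod_image hinjOn, Finset.prod_div_distrib, Finset.prod_const]
  have hn : ((univ.filter fun w => h w = v).filter (fun w => blockOf h A w = ∅)).card +
      ((univ.filter fun w => h w = v).filter (fun w => ¬blockOf h A w = ∅)).card =
      (univ.filter fun w => h w = v).card :=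
    Finset.card_filter_add_card_filter_not _
  rw [← hn, pow_add]
  have hne0 : (s v 0) ^ ((univ.filter fun w => h w = v).filter
      (fun w => ¬blockOf h A w = ∅)).card ≠ 0 := pow_ne_zero _ (hs v)
  field_simp

end Weight

section Final

variable {H : SimpleGraph VH} [DecidableRel H.Adj] {G : SimpleGraph VG} [DecidableRel G.Adj]
  {h : VG → VH} {σ : VH → Finset (Finset (Sym2 VH))}

set_option maxHeartbeats 1000000 in
set_option synthInstance.maxHeartbeats 1000000 in
open Classical in
lemma embCP_eq_card (H : SimpleGraph VH) (σ : VH → Finset (Finset (Sym2 VH)))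
    (G : SimpleGraph VG) (h : VG → VH) :
    embCP H σ G h = (univ.filter fun φ : {p : VH × Finset (Sym2 VH) // p.2 ∈ σ p.1} → VG =>
      Function.Injective φ ∧ (∀ x y, (Fractured H σ).Adj x y → G.Adj (φ x) (φ y)) ∧
        ∀ x, h (φ x) = x.1.1).card := by
  letI instP : DecidablePred (fun φ : {p : VH × Finset (Sym2 VH) // p.2 ∈ σ p.1} → VG =>
      Function.Injective φ ∧ (∀ x y, (Fractured H σ).Adj x y → G.Adj (φ x) (φ y)) ∧
        ∀ x, h (φ x) = x.1.1) := fun _ => Classical.propDecidable _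
  letI instF : Fintype {φ : {p : VH × Finset (Sym2 VH) // p.2 ∈ σ p.1} → VG //
      Function.Injective φ ∧ (∀ x y, (Fractured H σ).Adj x y → G.Adj (φ x) (φ y)) ∧
        ∀ x, h (φ x) = x.1.1} := @Subtype.fintype _ _ instP _
  rw [embCP, @Nat.card_eq_fintype_card _ instF, @Fintype.card_subtype _ _ _ instF instP]
  congr!

set_option maxHeartbeats 1000000 in
set_option synthInstance.maxHeartbeats 1000000 in
open Classical in
lemma card_fiber (hσ : ∀ v, IsPartitionOf (incEdges H v) (σ v)) :
    ((G.edgeFinset.powerset.filter (Colourful H h)).filter fun A => fracOf h A = σ).card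
      = embCP H σ G h := by
  rw [embCP_eq_card]
  refine Finset.card_bij' (fun A hA => phiFor h A σ (Finset.mem_filter.1 hA).2)
    (fun φ _ => edgesOf H σ φ) ?_ ?_ ?_ ?_
  · intro A hA
    obtain ⟨hA1, hfr⟩ := Finset.mem_filter.1 hA
    obtain ⟨hAp, hcf⟩ := Finset.mem_filter.1 hA1
    have hAs : A ⊆ G.edgeFinset := Finset.mem_powerset.1 hAp
    have hb : Set.BijOn (Sym2.map h) ↑A H.edgeSet := hcf
    simp only [Finset.mem_filter, Finset.mem_univ, true_and]
    exact ⟨phiFor_inj hb hfr, phiFor_hom hAs hb hfr, fun x => (phiFor_spec hfr x).1⟩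
  · intro φ hφ
    simp only [Finset.mem_filter, Finset.mem_univ, true_and] at hφ
    obtain ⟨hpinj, hphom, hpcol⟩ := hφ
    refine Finset.mem_filter.2 ⟨Finset.mem_filter.2 ⟨Finset.mem_powerset.2
      (edgesOf_subset hphom), ?_⟩, fracOf_edgesOf hσ hpinj hphom hpcol⟩
    exact (edgesOf_colourful hσ hpinj hphom hpcol : Set.BijOn _ _ _)
  · intro A hA
    obtain ⟨hA1, hfr⟩ := Finset.mem_filter.1 hA
    obtain ⟨hAp, hcf⟩ := Finset.mem_filter.1 hA1
    exact edgesOf_phiFor (Finset.mem_powerset.1 hAp) hcf hfr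
  · intro φ hφ
    simp only [Finset.mem_filter, Finset.mem_univ, true_and] at hφ
    obtain ⟨hpinj, hphom, hpcol⟩ := hφ
    funext x
    exact phiFor_unique (edgesOf_colourful hσ hpinj hphom hpcol)
      (fracOf_edgesOf hσ hpinj hphom hpcol) (hpcol x)
      (blockOf_edgesOf hσ hpinj hphom hpcol x)
end Final

end Aux

set_option maxHeartbeats 1000000 in
open Classical in
/-- `Holant(G,h,s⃗) = ∏_i s_i(0)^{n_i} · ∑_{σ⃗} #Emb_cp(H↿σ⃗ → (G,h)) ·
∏_i ∏_{B ∈ σ⃗(v_i)} s_i(|B|)/s_i(0)`, the sum being over all fractures `σ⃗` of `H`. -/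
theorem stmt17 (H : SimpleGraph VH) [DecidableRel H.Adj]
    (G : SimpleGraph VG) [DecidableRel G.Adj]
    (h : VG → VH) (hhom : ∀ u w, G.Adj u w → H.Adj (h u) (h w))
    (hnoiso : ∀ v : VH, ∃ u, H.Adj v u)
    (s : VH → ℕ → ℂ) (hs : ∀ v, s v 0 ≠ 0) :
    holant G H h s =
      (∏ v : VH, s v 0 ^ (Finset.univ.filter fun w => h w = v).card) *
        ∑ σ ∈ fracturesFinset H,
          (embCP H σ G h : ℂ) * ∏ v : VH, ∏ B ∈ σ v, s v B.card / s v 0 := by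
  unfold holant
  rw [Finset.mul_sum]
  rw [← Finset.sum_fiberwise_of_maps_to (g := fracOf h) (t := fracturesFinset H)
      (fun A hA => fracOf_mem_fractures ((Finset.mem_filter.1 hA).2 : Colourful H h A))
      (fun A => ∏ w : VG, s (h w) ((A.filter fun e => w ∈ e).card))]
  refine Finset.sum_congr rfl fun σ hσm => ?_
  have hσ : ∀ v, IsPartitionOf (incEdges H v) (σ v) := (Finset.mem_filter.1 hσm).2
  have hconst : ∀ A ∈ (G.edgeFinset.powerset.filter (Colourful H h)).filter
      (fun A => fracOf h A = σ),
      (∏ w : VG, s (h w) ((A.filter fun e => w ∈ e).card)) =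
        (∏ v : VH, s v 0 ^ (univ.filter fun w => h w = v).card) *
          ∏ v : VH, ∏ B ∈ σ v, s v B.card / s v 0 := by
    intro A hA
    obtain ⟨hA1, hfr⟩ := Finset.mem_filter.1 hA
    have hb : Set.BijOn (Sym2.map h) ↑A H.edgeSet := (Finset.mem_filter.1 hA1).2
    rw [weight_eq hs hb, hfr]
  rw [Finset.sum_congr rfl hconst, Finset.sum_const, card_fiber hσ, nsmul_eq_mul]
  ring
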